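/- If for some c : Fin m → ℝ the set ∂F_c of minimizers of y ↦ c ⬝ᵥ y over F is not convex, then c·A is positive semidefinite and singular (i.e. (c·A).PosSemidef and there exists x ≠ 0 with (c·A).mulVec x = 0). In other words, boundary non-convexities can occur only for c on the boundary of the cone {c | (c·A).PosSemidef}. -/

import Mathlib

open Matrix

theorem boundary_nonconvexity_only_on_cone_boundary (n m : ℕ)
    (A : Fin m → Matrix (Fin n) (Fin n) ℝ) (hA : ∀ k, (A k)ᵀ = A k)
    (b : Fin m → (Fin n → ℝ))
    (f : (Fin n → ℝ) → (Fin m → ℝ))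
    (hf : ∀ x k, f x k = x ⬝ᵥ (A k).mulVec x + 2 * (b k ⬝ᵥ x))
    (c : Fin m → ℝ)
    (hncvx : ¬ Convex ℝ {y ∈ Set.range f | ∀ y' ∈ Set.range f, c ⬝ᵥ y ≤ c ⬝ᵥ y'}) :
    (∑ k, c k • A k).PosSemidef ∧
      ∃ x : Fin n → ℝ, x ≠ 0 ∧ (∑ k, c k • A k).mulVec x = 0 := by
  set Q : Matrix (Fin n) (Fin n) ℝ := ∑ k, c k • A k with hQ
  set β : Fin n → ℝ := ∑ k, c k • b k with hβ
  have hQsym : Qᵀ = Q := by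
    rw [hQ, transpose_sum]
    exact Finset.sum_congr rfl fun k _ => by rw [transpose_smul, hA]
  -- symmetry of the bilinear form
  have hsym : ∀ u w : Fin n → ℝ, u ⬝ᵥ Q.mulVec w = w ⬝ᵥ Q.mulVec u := by
    intro u w
    rw [dotProduct_mulVec, ← hQsym, ← mulVec_transpose, transpose_transpose,
      dotProduct_comm, hQsym]
  have hQmv : ∀ x : Fin n → ℝ, Q.mulVec x = ∑ k, c k • (A k).mulVec x := by
    intro x
    rw [hQ]
    ext i
    simp only [mulVec, dotProduct, Finset.sum_apply, Matrix.sum_apply, Matrix.smul_apply,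
      smul_eq_mul, Finset.sum_mul, Pi.smul_apply]
    rw [Finset.sum_comm]
    exact Finset.sum_congr rfl fun k _ => by
      rw [Finset.mul_sum]; exact Finset.sum_congr rfl fun j _ => by ring
  have key : ∀ x, c ⬝ᵥ f x = x ⬝ᵥ Q.mulVec x + 2 * (β ⬝ᵥ x) := by
    intro x
    have h1 : x ⬝ᵥ Q.mulVec x = ∑ k, c k * (x ⬝ᵥ (A k).mulVec x) := by
      rw [hQmv]
      simp only [dotProduct, mulVec, Finset.sum_apply, Pi.smul_apply, smul_eq_mul,
        Finset.mul_sum]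
      rw [Finset.sum_comm]
      exact Finset.sum_congr rfl fun k _ =>
        Finset.sum_congr rfl fun i _ => Finset.sum_congr rfl fun j _ => by ring
    have h2 : β ⬝ᵥ x = ∑ k, c k * (b k ⬝ᵥ x) := by
      rw [hβ]
      simp only [dotProduct, Finset.sum_apply, Pi.smul_apply, smul_eq_mul, Finset.mul_sum,
        Finset.sum_mul]
      rw [Finset.sum_comm]
      exact Finset.sum_congr rfl fun k _ => Finset.sum_congr rfl fun i _ => by ring
    have h0 : c ⬝ᵥ f x = ∑ k, c k * (x ⬝ᵥ (A k).mulVec x + 2 * (b k ⬝ᵥ x)) := by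
      simp [dotProduct, hf]
    rw [h0, h1, h2, Finset.mul_sum, ← Finset.sum_add_distrib]
    exact Finset.sum_congr rfl fun k _ => by ring
  -- the set is nonempty
  have hne : {y ∈ Set.range f | ∀ y' ∈ Set.range f, c ⬝ᵥ y ≤ c ⬝ᵥ y'}.Nonempty := by
    by_contra h
    rw [Set.not_nonempty_iff_eq_empty] at h
    exact hncvx (h ▸ convex_empty)
  obtain ⟨y₀, ⟨x₀, rfl⟩, hmin⟩ := hne
  have hmin' : ∀ x, c ⬝ᵥ f x₀ ≤ c ⬝ᵥ f x := fun x => hmin _ ⟨x, rfl⟩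
  -- expansion
  have expand : ∀ (v : Fin n → ℝ) (t : ℝ),
      c ⬝ᵥ f (x₀ + t • v) = c ⬝ᵥ f x₀ + t ^ 2 * (v ⬝ᵥ Q.mulVec v)
        + t * (2 * (v ⬝ᵥ Q.mulVec x₀) + 2 * (β ⬝ᵥ v)) := by
    intro v t
    rw [key, key]
    simp only [mulVec_add, mulVec_smul, dotProduct_add, add_dotProduct,
      dotProduct_smul, smul_dotProduct, smul_eq_mul, hsym x₀ v]
    ring
  have hquad : ∀ (v : Fin n → ℝ) (t : ℝ),
      0 ≤ t ^ 2 * (v ⬝ᵥ Q.mulVec v) + t * (2 * (v ⬝ᵥ Q.mulVec x₀) + 2 * (β ⬝ᵥ v)) := by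
    intro v t
    have := hmin' (x₀ + t • v)
    rw [expand v t] at this
    linarith
  have ha : ∀ v : Fin n → ℝ, 0 ≤ v ⬝ᵥ Q.mulVec v := by
    intro v
    have h1 := hquad v 1
    have h2 := hquad v (-1)
    nlinarith
  have hb : ∀ v : Fin n → ℝ, 2 * (v ⬝ᵥ Q.mulVec x₀) + 2 * (β ⬝ᵥ v) = 0 := by
    intro v
    set a := v ⬝ᵥ Q.mulVec v with hav
    set B := 2 * (v ⬝ᵥ Q.mulVec x₀) + 2 * (β ⬝ᵥ v) with hBv
    have ha' := ha v
    have hpos : (0:ℝ) < a + 1 := by linarith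
    have h := hquad v (-B / (a + 1))
    rw [← hav, ← hBv] at h
    have h2 : 0 ≤ (-B / (a + 1)) ^ 2 * a + -B / (a + 1) * B := h
    rw [div_pow, neg_pow] at h2
    have h3 : 0 ≤ B ^ 2 * a - B ^ 2 * (a + 1) := by
      have := mul_le_mul_of_nonneg_right h2 (le_of_lt (mul_pos hpos hpos))
      rw [zero_mul] at this
      calc 0 ≤ ((-1) ^ 2 * B ^ 2 / (a + 1) ^ 2 * a + -B / (a + 1) * B) * ((a+1)*(a+1)) := this
        _ = B ^ 2 * a - B ^ 2 * (a + 1) := by field_simp; ring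
    nlinarith [sq_nonneg B]
  have hPSD : Q.PosSemidef := by
    refine posSemidef_iff_dotProduct_mulVec.mpr ⟨?_, ?_⟩
    · show Qᴴ = Q
      rw [conjTranspose_eq_transpose_of_trivial, hQsym]
    · intro x
      simpa using ha x
  refine ⟨hPSD, ?_⟩
  by_contra hcon
  push_neg at hcon
  have hker : ∀ x : Fin n → ℝ, Q.mulVec x = 0 → x = 0 := by
    intro x hx
    by_contra hx0
    exact hcon x hx0 hx
  apply hncvx
  have hSeq : {y ∈ Set.range f | ∀ y' ∈ Set.range f, c ⬝ᵥ y ≤ c ⬝ᵥ y'} = {f x₀} := by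
    ext y
    constructor
    · rintro ⟨⟨x, rfl⟩, hy⟩
      have heq : c ⬝ᵥ f x = c ⬝ᵥ f x₀ := le_antisymm (hy _ ⟨x₀, rfl⟩) (hmin' x)
      have hd := expand (x - x₀) 1
      have hx1 : x₀ + (1:ℝ) • (x - x₀) = x := by simp
      rw [hx1] at hd
      have hBd := hb (x - x₀)
      have hdQd : (x - x₀) ⬝ᵥ Q.mulVec (x - x₀) = 0 := by
        rw [heq, hBd] at hd; linarith
      have hQd : Q.mulVec (x - x₀) = 0 := by
        have := (hPSD.dotProduct_mulVec_zero_iff (x - x₀)).mp (by simpa using hdQd)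
        exact this
      have : x - x₀ = 0 := hker _ hQd
      have hxx : x = x₀ := by
        funext i
        have := congrFun this i
        simp at this
        linarith
      rw [hxx]
      rfl
    · rintro rfl
      exact ⟨⟨x₀, rfl⟩, hmin⟩
  rw [hSeq]
  exact convex_singleton _
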